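/- arXiv:1506.08420 — 3 statements merged into one kernel-verified Lean document; each statement's English description precedes it below -/
import Mathlib

section
/- Let A be a linearly ordered group and G a directed po-group. Then the unrestricted Wreath product A Wr G satisfies RDP₂ if and only if G satisfies RDP₂. -/
/-! Riesz decomposition properties relative to explicit multiplication `mul`,
unit `one`, and order relation `le`, together with the lexicographic product
order and (unrestricted/restricted, right/left) wreath products of po-groups. -/

/-- The Riesz decomposition property (RDP). -/
def RDPWith {M : Type*} (mul : M → M → M) (one : M) (le : M → M → Prop) : Prop :=
  ∀ a₁ a₂ b₁ b₂ : M,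
    le one a₁ → le one a₂ → le one b₁ → le one b₂ → mul a₁ a₂ = mul b₁ b₂ →
    ∃ c₁₁ c₁₂ c₂₁ c₂₂ : M,
      le one c₁₁ ∧ le one c₁₂ ∧ le one c₂₁ ∧ le one c₂₂ ∧
      a₁ = mul c₁₁ c₁₂ ∧ a₂ = mul c₂₁ c₂₂ ∧ b₁ = mul c₁₁ c₂₁ ∧ b₂ = mul c₁₂ c₂₂

/-- The Riesz decomposition property RDP₁ (commutativity below the
cross-diagonal entries `c₁₂`, `c₂₁`). -/
def RDP1With {M : Type*} (mul : M → M → M) (one : M) (le : M → M → Prop) : Prop :=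
  ∀ a₁ a₂ b₁ b₂ : M,
    le one a₁ → le one a₂ → le one b₁ → le one b₂ → mul a₁ a₂ = mul b₁ b₂ →
    ∃ c₁₁ c₁₂ c₂₁ c₂₂ : M,
      le one c₁₁ ∧ le one c₁₂ ∧ le one c₂₁ ∧ le one c₂₂ ∧
      a₁ = mul c₁₁ c₁₂ ∧ a₂ = mul c₂₁ c₂₂ ∧ b₁ = mul c₁₁ c₂₁ ∧ b₂ = mul c₁₂ c₂₂ ∧
      (∀ x y : M, le one x → le x c₁₂ → le one y → le y c₂₁ → mul x y = mul y x)

/-- The Riesz decomposition property RDP₂ (the infimum of `c₁₂` and `c₂₁`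
exists and equals `one`; the last clause, together with `le one c₁₂` and
`le one c₂₁`, says exactly that `one` is the greatest lower bound). -/
def RDP2With {M : Type*} (mul : M → M → M) (one : M) (le : M → M → Prop) : Prop :=
  ∀ a₁ a₂ b₁ b₂ : M,
    le one a₁ → le one a₂ → le one b₁ → le one b₂ → mul a₁ a₂ = mul b₁ b₂ →
    ∃ c₁₁ c₁₂ c₂₁ c₂₂ : M,
      le one c₁₁ ∧ le one c₁₂ ∧ le one c₂₁ ∧ le one c₂₂ ∧
      a₁ = mul c₁₁ c₁₂ ∧ a₂ = mul c₂₁ c₂₂ ∧ b₁ = mul c₁₁ c₂₁ ∧ b₂ = mul c₁₂ c₂₂ ∧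
      (∀ z : M, le z c₁₂ → le z c₂₁ → le z one)

/-- RDP for the sub-po-group carried by the subset `S`. -/
def RDPWithOn {M : Type*} (S : Set M) (mul : M → M → M) (one : M)
    (le : M → M → Prop) : Prop :=
  ∀ a₁ a₂ b₁ b₂ : M, a₁ ∈ S → a₂ ∈ S → b₁ ∈ S → b₂ ∈ S →
    le one a₁ → le one a₂ → le one b₁ → le one b₂ → mul a₁ a₂ = mul b₁ b₂ →
    ∃ c₁₁ c₁₂ c₂₁ c₂₂ : M, c₁₁ ∈ S ∧ c₁₂ ∈ S ∧ c₂₁ ∈ S ∧ c₂₂ ∈ S ∧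
      le one c₁₁ ∧ le one c₁₂ ∧ le one c₂₁ ∧ le one c₂₂ ∧
      a₁ = mul c₁₁ c₁₂ ∧ a₂ = mul c₂₁ c₂₂ ∧ b₁ = mul c₁₁ c₂₁ ∧ b₂ = mul c₁₂ c₂₂

/-- RDP₁ for the sub-po-group carried by the subset `S`. -/
def RDP1WithOn {M : Type*} (S : Set M) (mul : M → M → M) (one : M)
    (le : M → M → Prop) : Prop :=
  ∀ a₁ a₂ b₁ b₂ : M, a₁ ∈ S → a₂ ∈ S → b₁ ∈ S → b₂ ∈ S →
    le one a₁ → le one a₂ → le one b₁ → le one b₂ → mul a₁ a₂ = mul b₁ b₂ →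
    ∃ c₁₁ c₁₂ c₂₁ c₂₂ : M, c₁₁ ∈ S ∧ c₁₂ ∈ S ∧ c₂₁ ∈ S ∧ c₂₂ ∈ S ∧
      le one c₁₁ ∧ le one c₁₂ ∧ le one c₂₁ ∧ le one c₂₂ ∧
      a₁ = mul c₁₁ c₁₂ ∧ a₂ = mul c₂₁ c₂₂ ∧ b₁ = mul c₁₁ c₂₁ ∧ b₂ = mul c₁₂ c₂₂ ∧
      (∀ x y : M, x ∈ S → y ∈ S →
        le one x → le x c₁₂ → le one y → le y c₂₁ → mul x y = mul y x)

/-- RDP₂ for the sub-po-group carried by the subset `S`. -/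
def RDP2WithOn {M : Type*} (S : Set M) (mul : M → M → M) (one : M)
    (le : M → M → Prop) : Prop :=
  ∀ a₁ a₂ b₁ b₂ : M, a₁ ∈ S → a₂ ∈ S → b₁ ∈ S → b₂ ∈ S →
    le one a₁ → le one a₂ → le one b₁ → le one b₂ → mul a₁ a₂ = mul b₁ b₂ →
    ∃ c₁₁ c₁₂ c₂₁ c₂₂ : M, c₁₁ ∈ S ∧ c₁₂ ∈ S ∧ c₂₁ ∈ S ∧ c₂₂ ∈ S ∧
      le one c₁₁ ∧ le one c₁₂ ∧ le one c₂₁ ∧ le one c₂₂ ∧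
      a₁ = mul c₁₁ c₁₂ ∧ a₂ = mul c₂₁ c₂₂ ∧ b₁ = mul c₁₁ c₂₁ ∧ b₂ = mul c₁₂ c₂₂ ∧
      (∀ z : M, z ∈ S → le z c₁₂ → le z c₂₁ → le z one)

/-- The Riesz interpolation property (RIP). -/
def RIPWith {M : Type*} (le : M → M → Prop) : Prop :=
  ∀ a₁ a₂ b₁ b₂ : M, le a₁ b₁ → le a₁ b₂ → le a₂ b₁ → le a₂ b₂ →
    ∃ c : M, le a₁ c ∧ le a₂ c ∧ le c b₁ ∧ le c b₂

/-- RIP for the subposet carried by the subset `S`. -/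
def RIPWithOn {M : Type*} (S : Set M) (le : M → M → Prop) : Prop :=
  ∀ a₁ a₂ b₁ b₂ : M, a₁ ∈ S → a₂ ∈ S → b₁ ∈ S → b₂ ∈ S →
    le a₁ b₁ → le a₁ b₂ → le a₂ b₁ → le a₂ b₂ →
    ∃ c ∈ S, le a₁ c ∧ le a₂ c ∧ le c b₁ ∧ le c b₂

/-- The lexicographic order on a product: `(g₁,h₁) ≤ (g₂,h₂)` iff `g₁ < g₂`,
or `g₁ = g₂` and `h₁ ≤ h₂`. -/
def lexLE {A B : Type*} [PartialOrder A] [LE B] (p q : A × B) : Prop :=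
  p.1 < q.1 ∨ (p.1 = q.1 ∧ p.2 ≤ q.2)

/-- A poset is an antilattice if only comparable pairs of elements have a
join or a meet. -/
def IsAntilattice (G : Type*) [PartialOrder G] : Prop :=
  ∀ a b : G, ((∃ s, IsLUB {a, b} s) ∨ (∃ s, IsGLB {a, b} s)) → a ≤ b ∨ b ≤ a

/-- Multiplication of the unrestricted Wreath product `A Wr G`:
`(n,⟨g_a⟩)·(m,⟨h_a⟩) = (n·m, ⟨g_a·h_{a·n}⟩)`. -/
def wrMul {A G : Type*} [Mul A] [Mul G] (p q : A × (A → G)) : A × (A → G) :=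
  (p.1 * q.1, fun a => p.2 a * q.2 (a * p.1))

/-- The unit of the Wreath product `A Wr G`. -/
def wrOne (A G : Type*) [One A] [One G] : A × (A → G) :=
  (1, fun _ => 1)

/-- The order of the Wreath product `A Wr G`: `(n,⟨g_a⟩) ≤ (m,⟨h_a⟩)` iff
`n < m`, or `n = m` and `g_a ≤ h_a` for all `a`. -/
def wrLE {A G : Type*} [PartialOrder A] [LE G] (p q : A × (A → G)) : Prop :=
  p.1 < q.1 ∨ (p.1 = q.1 ∧ ∀ a, p.2 a ≤ q.2 a)

/-- The carrier of the restricted Wreath product `A wr G`: elements whose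
second component equals `1` at all but finitely many places. -/
def wrS (A G : Type*) [One G] : Set (A × (A → G)) :=
  {p | (Function.mulSupport p.2).Finite}

/-- Multiplication of the wreath products over `ℤ`:
`(n,⟨g_i⟩)·(m,⟨h_i⟩) = (n+m, ⟨g_i·h_{i+n}⟩)`. -/
def zwrMul {G : Type*} [Mul G] (p q : ℤ × (ℤ → G)) : ℤ × (ℤ → G) :=
  (p.1 + q.1, fun i => p.2 i * q.2 (i + p.1))

/-- The unit of the wreath products over `ℤ`. -/
def zwrOne (G : Type*) [One G] : ℤ × (ℤ → G) :=
  (0, fun _ => 1)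

/-- The inverse in the wreath products over `ℤ`. -/
def zwrInv {G : Type*} [Inv G] (p : ℤ × (ℤ → G)) : ℤ × (ℤ → G) :=
  (-p.1, fun i => (p.2 (i - p.1))⁻¹)

/-- The carrier of the (restricted) wreath products over `ℤ`: elements with
`g_i = 1` for all but finitely many `i`. -/
def zwrS (G : Type*) [One G] : Set (ℤ × (ℤ → G)) :=
  {p | (Function.mulSupport p.2).Finite}

/-- Strict positivity in the right wreath product `ℤ →wr G`: either `n > 0`,
or `n = 0`, some `g_i ≠ 1`, and `g_j > 1` where `j` is the greatest index `i`
with `g_i ≠ 1`. -/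
def rPos {G : Type*} [One G] [LT G] (p : ℤ × (ℤ → G)) : Prop :=
  0 < p.1 ∨ (p.1 = 0 ∧ ∃ j : ℤ, 1 < p.2 j ∧ ∀ i : ℤ, j < i → p.2 i = 1)

/-- Strict positivity in the left wreath product `ℤ ←wr G`: either `n > 0`,
or `n = 0`, some `g_i ≠ 1`, and `g_j > 1` where `j` is the least index `i`
with `g_i ≠ 1`. -/
def lPos {G : Type*} [One G] [LT G] (p : ℤ × (ℤ → G)) : Prop :=
  0 < p.1 ∨ (p.1 = 0 ∧ ∃ j : ℤ, 1 < p.2 j ∧ ∀ i : ℤ, i < j → p.2 i = 1)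

/-- The order of the right wreath product `ℤ →wr G`. -/
def rLE {G : Type*} [Group G] [LT G] (p q : ℤ × (ℤ → G)) : Prop :=
  p = q ∨ rPos (zwrMul (zwrInv p) q)

/-- The order of the left wreath product `ℤ ←wr G`. -/
def lLE {G : Type*} [Group G] [LT G] (p q : ℤ × (ℤ → G)) : Prop :=
  p = q ∨ lPos (zwrMul (zwrInv p) q)


/-! ### Auxiliary lemmas -/

section Glem
variable {G : Type*} [Group G] [PartialOrder G]
    [CovariantClass G G (· * ·) (· ≤ ·)]
    [CovariantClass G G (Function.swap (· * ·)) (· ≤ ·)]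

theorem wr_orth_comm {u w : G} (hu : 1 ≤ u) (hw : 1 ≤ w)
    (H : ∀ z : G, z ≤ w → z ≤ u → z ≤ 1) : u * w = w * u := by
  have key : ∀ c : G, u ≤ c → w ≤ c → u * w ≤ c ∧ w * u ≤ c := by
    intro c huc hwc
    constructor
    · have h1 : w * c⁻¹ * u ≤ w := by
        have : w * c⁻¹ * u ≤ w * c⁻¹ * c := mul_le_mul_right huc _
        rwa [inv_mul_cancel_right] at this
      have h2 : w * c⁻¹ * u ≤ u := by
        have hwc' : w * c⁻¹ ≤ 1 := by
          have := mul_le_mul_left hwc c⁻¹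
          rwa [mul_inv_cancel] at this
        have := mul_le_mul_left hwc' u
        rwa [one_mul] at this
      have h3 := H _ h1 h2
      have h4 : w * c⁻¹ ≤ u⁻¹ := by
        have := mul_le_mul_left h3 u⁻¹
        rwa [mul_inv_cancel_right, one_mul] at this
      have h5 : u * (w * c⁻¹) ≤ 1 := by
        have := mul_le_mul_right h4 u
        rwa [mul_inv_cancel] at this
      have := mul_le_mul_left h5 c
      rwa [one_mul, mul_assoc, inv_mul_cancel_right] at this
    · have h1 : u * c⁻¹ * w ≤ u := by
        have : u * c⁻¹ * w ≤ u * c⁻¹ * c := mul_le_mul_right hwc _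
        rwa [inv_mul_cancel_right] at this
      have h2 : u * c⁻¹ * w ≤ w := by
        have huc' : u * c⁻¹ ≤ 1 := by
          have := mul_le_mul_left huc c⁻¹
          rwa [mul_inv_cancel] at this
        have := mul_le_mul_left huc' w
        rwa [one_mul] at this
      have h3 := H _ h2 h1
      have h4 : u * c⁻¹ ≤ w⁻¹ := by
        have := mul_le_mul_left h3 w⁻¹
        rwa [mul_inv_cancel_right, one_mul] at this
      have h5 : w * (u * c⁻¹) ≤ 1 := by
        have := mul_le_mul_right h4 w
        rwa [mul_inv_cancel] at this
      have := mul_le_mul_left h5 c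
      rwa [one_mul, mul_assoc, inv_mul_cancel_right] at this
  exact le_antisymm
    ((key _ (le_mul_of_one_le_left' hw) (le_mul_of_one_le_right' hu)).1)
    ((key _ (le_mul_of_one_le_right' hw) (le_mul_of_one_le_left' hu)).2)

theorem wr_decomp_point (hdir : ∀ x y : G, ∃ z : G, x ≤ z ∧ y ≤ z)
    (hG : RDP2With (fun a b : G => a * b) 1 (· ≤ ·))
    (pos1 pos2 : Prop) (P Q g h : G)
    (hP : pos1 → 1 ≤ P) (hQ : pos1 → 1 ≤ Q)
    (hg : pos2 → 1 ≤ g) (hh : pos2 → 1 ≤ h)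
    (hm : P * g = Q * h) :
    ∃ τ w u v : G, 1 ≤ w ∧ 1 ≤ u ∧ (pos1 → 1 ≤ τ) ∧ (pos2 → 1 ≤ v) ∧
      τ * w = P ∧ τ * u = Q ∧ u * v = g ∧ w * v = h ∧
      (∀ z : G, z ≤ w → z ≤ u → z ≤ 1) := by
  by_cases hp1 : pos1 <;> by_cases hp2 : pos2
  · obtain ⟨c11, c12, c21, c22, h11, h12, h21, h22, e1, e2, e3, e4, hmeet⟩ :=
      hG P g Q h (hP hp1) (hg hp2) (hQ hp1) (hh hp2) hm
    exact ⟨c11, c12, c21, c22, h12, h21, fun _ => h11, fun _ => h22,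
      e1.symm, e3.symm, e2.symm, e4.symm, hmeet⟩
  · -- pos1, ¬pos2
    obtain ⟨s, hPs, hQs⟩ := hdir P Q
    have hs1 : 1 ≤ P⁻¹ * s := by
      have := mul_le_mul_right hPs P⁻¹; rwa [inv_mul_cancel] at this
    have hs2 : 1 ≤ Q⁻¹ * s := by
      have := mul_le_mul_right hQs Q⁻¹; rwa [inv_mul_cancel] at this
    obtain ⟨c11, c12, c21, c22, h11, h12, h21, h22, e1, e2, e3, e4, hmeet⟩ :=
      hG P (P⁻¹ * s) Q (Q⁻¹ * s) (hP hp1) hs1 (hQ hp1) hs2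
        (by show P * (P⁻¹ * s) = Q * (Q⁻¹ * s); rw [mul_inv_cancel_left, mul_inv_cancel_left])
    have e1' : P = c11 * c12 := e1
    have e3' : Q = c11 * c21 := e3
    have hcm : c21 * c12 = c12 * c21 := wr_orth_comm h21 h12 hmeet
    refine ⟨c11, c12, c21, c21⁻¹ * g, h12, h21, fun _ => h11,
      fun hp => absurd hp hp2, e1'.symm, e3'.symm, mul_inv_cancel_left _ _, ?_, hmeet⟩
    calc c12 * (c21⁻¹ * g) = c21⁻¹ * (c21 * c12) * c21⁻¹ * g := by group
      _ = c21⁻¹ * (c12 * c21) * c21⁻¹ * g := by rw [hcm]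
      _ = c21⁻¹ * c12 * g := by group
      _ = Q⁻¹ * P * g := by rw [e1', e3']; group
      _ = Q⁻¹ * (Q * h) := by rw [mul_assoc, hm]
      _ = h := inv_mul_cancel_left _ _
  · -- ¬pos1, pos2
    obtain ⟨s, hgs, hhs⟩ := hdir g h
    have hs1 : 1 ≤ s * g⁻¹ := by
      have := mul_le_mul_left hgs g⁻¹; rwa [mul_inv_cancel] at this
    have hs2 : 1 ≤ s * h⁻¹ := by
      have := mul_le_mul_left hhs h⁻¹; rwa [mul_inv_cancel] at this
    obtain ⟨c11, c12, c21, c22, h11, h12, h21, h22, e1, e2, e3, e4, hmeet⟩ :=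
      hG (s * g⁻¹) g (s * h⁻¹) h hs1 (hg hp2) hs2 (hh hp2)
        (by show s * g⁻¹ * g = s * h⁻¹ * h; rw [inv_mul_cancel_right, inv_mul_cancel_right])
    have e2' : g = c21 * c22 := e2
    have e4' : h = c12 * c22 := e4
    have hcm : c21 * c12 = c12 * c21 := wr_orth_comm h21 h12 hmeet
    refine ⟨P * c12⁻¹, c12, c21, c22, h12, h21, fun hp => absurd hp hp1,
      fun _ => h22, inv_mul_cancel_right _ _, ?_, e2'.symm, e4'.symm, hmeet⟩
    calc P * c12⁻¹ * c21 = P * (c12⁻¹ * (c21 * c12) * c12⁻¹) := by group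
      _ = P * (c12⁻¹ * (c12 * c21) * c12⁻¹) := by rw [hcm]
      _ = P * (c21 * c12⁻¹) := by group
      _ = P * (g * h⁻¹) := by rw [e2', e4']; group
      _ = P * g * h⁻¹ := by rw [mul_assoc]
      _ = Q * h * h⁻¹ := by rw [hm]
      _ = Q := mul_inv_cancel_right _ _
  · -- neither
    obtain ⟨s, hrs, hs1⟩ := hdir (P⁻¹ * Q)⁻¹ 1
    have h_sr : 1 ≤ s * (P⁻¹ * Q) := by
      have := mul_le_mul_left hrs (P⁻¹ * Q)
      rwa [inv_mul_cancel] at this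
    have h_rs : 1 ≤ (P⁻¹ * Q) * s := by
      have := mul_le_mul_right hrs (P⁻¹ * Q)
      rwa [mul_inv_cancel] at this
    obtain ⟨c11, c12, c21, c22, h11, h12, h21, h22, e1, e2, e3, e4, hmeet⟩ :=
      hG (s * (P⁻¹ * Q)) s s ((P⁻¹ * Q) * s) h_sr hs1 hs1 h_rs (mul_assoc _ _ _)
    have e1' : s * (P⁻¹ * Q) = c11 * c12 := e1
    have e3' : s = c11 * c21 := e3
    have hcm : c21 * c12 = c12 * c21 := wr_orth_comm h21 h12 hmeet
    have hc11 : s * c21⁻¹ = c11 := by rw [e3']; group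
    have key : c21⁻¹ * c12 = P⁻¹ * Q := by
      apply mul_left_cancel (a := s)
      rw [← mul_assoc, hc11]
      exact e1'.symm
    have key2 : c12⁻¹ * c21 = Q⁻¹ * P := by
      have := congrArg (·⁻¹) key
      simpa [mul_inv_rev] using this
    refine ⟨P * c21⁻¹, c21, c12, c12⁻¹ * g, h21, h12, fun hp => absurd hp hp1,
      fun hp => absurd hp hp2, inv_mul_cancel_right _ _, ?_, mul_inv_cancel_left _ _, ?_,
      fun z hz1 hz2 => hmeet z hz2 hz1⟩
    · calc P * c21⁻¹ * c12 = P * (c21⁻¹ * c12) := mul_assoc _ _ _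
        _ = P * (P⁻¹ * Q) := by rw [key]
        _ = Q := mul_inv_cancel_left _ _
    · calc c21 * (c12⁻¹ * g) = c12⁻¹ * (c12 * c21) * c12⁻¹ * g := by group
        _ = c12⁻¹ * (c21 * c12) * c12⁻¹ * g := by rw [hcm]
        _ = c12⁻¹ * c21 * g := by group
        _ = Q⁻¹ * P * g := by rw [key2]
        _ = Q⁻¹ * (Q * h) := by rw [mul_assoc, hm]
        _ = h := inv_mul_cancel_left _ _
end Glem


def wrInv {A G : Type*} [Group A] [Group G] (p : A × (A → G)) : A × (A → G) :=
  (p.1⁻¹, fun a => (p.2 (a * p.1⁻¹))⁻¹)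

section Wlem
variable {A G : Type*} [Group A] [Group G]

theorem wrMul_assoc (p q r : A × (A → G)) :
    wrMul (wrMul p q) r = wrMul p (wrMul q r) := by
  simp only [wrMul, Prod.mk.injEq]
  exact ⟨mul_assoc _ _ _, funext fun a => by rw [mul_assoc (p.2 a), ← mul_assoc a p.1 q.1]⟩

theorem wrMul_one (p : A × (A → G)) : wrMul p (wrOne A G) = p :=
  Prod.ext_iff.mpr ⟨mul_one _, funext fun a => by
    show p.2 a * 1 = p.2 a
    rw [mul_one]⟩

theorem one_wrMul (p : A × (A → G)) : wrMul (wrOne A G) p = p :=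
  Prod.ext_iff.mpr ⟨one_mul _, funext fun a => by
    show 1 * p.2 (a * 1) = p.2 a
    rw [one_mul, mul_one]⟩

theorem wrInv_mul (p : A × (A → G)) : wrMul (wrInv p) p = wrOne A G :=
  Prod.ext_iff.mpr ⟨inv_mul_cancel _, funext fun a => by
    show (p.2 (a * p.1⁻¹))⁻¹ * p.2 (a * p.1⁻¹) = 1
    rw [inv_mul_cancel]⟩

theorem wrMul_inv (p : A × (A → G)) : wrMul p (wrInv p) = wrOne A G :=
  Prod.ext_iff.mpr ⟨mul_inv_cancel _, funext fun a => by
    show p.2 a * (p.2 (a * p.1 * p.1⁻¹))⁻¹ = 1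
    rw [mul_inv_cancel_right, mul_inv_cancel]⟩

end Wlem

/-- For a linearly ordered group `A` and a directed po-group `G`,
the unrestricted Wreath product `A Wr G` satisfies RDP₂ iff `G` does. -/
theorem wreath_rdp2_iff {A G : Type*} [Group A] [LinearOrder A]
    [CovariantClass A A (· * ·) (· ≤ ·)]
    [CovariantClass A A (Function.swap (· * ·)) (· ≤ ·)]
    [Group G] [PartialOrder G]
    [CovariantClass G G (· * ·) (· ≤ ·)]
    [CovariantClass G G (Function.swap (· * ·)) (· ≤ ·)]
    (hdir : ∀ x y : G, ∃ z : G, x ≤ z ∧ y ≤ z) :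
    RDP2With (fun p q : A × (A → G) => wrMul p q) (wrOne A G) wrLE ↔
      RDP2With (fun a b : G => a * b) 1 (· ≤ ·) := by
  constructor
  · -- W ⇒ G
    intro hW a₁ a₂ b₁ b₂ h1 h2 h3 h4 heq
    have hpos : ∀ g : G, 1 ≤ g → wrLE (wrOne A G) ((1 : A), fun _ => g) :=
      fun g hg => Or.inr ⟨rfl, fun _ => hg⟩
    obtain ⟨C11, C12, C21, C22, p11, p12, p21, p22, e1, e2, e3, e4, hmeet⟩ :=
      hW ((1:A), fun _ => a₁) ((1:A), fun _ => a₂) ((1:A), fun _ => b₁)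
        ((1:A), fun _ => b₂) (hpos _ h1) (hpos _ h2) (hpos _ h3) (hpos _ h4)
        (Prod.ext_iff.mpr ⟨rfl, funext fun _ => heq⟩)
    have le_fst : ∀ C : A × (A → G), wrLE (wrOne A G) C → 1 ≤ C.1 := by
      intro C hC
      rcases hC with hlt | ⟨heq', _⟩
      · exact le_of_lt hlt
      · exact le_of_eq heq'
    have unit : ∀ x y : A, 1 ≤ x → 1 ≤ y → (1 : A) = x * y → x = 1 ∧ y = 1 := by
      intro x y hx hy hxy
      have hx1 : x ≤ 1 := by
        calc x = x * 1 := (mul_one x).symm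
          _ ≤ x * y := mul_le_mul_right hy x
          _ = 1 := hxy.symm
      have hx' : x = 1 := le_antisymm hx1 hx
      refine ⟨hx', ?_⟩
      rw [hx', one_mul] at hxy
      exact hxy.symm
    have f1 : (1 : A) = C11.1 * C12.1 := congrArg Prod.fst e1
    have f2 : (1 : A) = C21.1 * C22.1 := congrArg Prod.fst e2
    obtain ⟨q11, q12⟩ := unit _ _ (le_fst _ p11) (le_fst _ p12) f1
    obtain ⟨q21, q22⟩ := unit _ _ (le_fst _ p21) (le_fst _ p22) f2
    have pf : ∀ C : A × (A → G), C.1 = 1 → wrLE (wrOne A G) C → ∀ a, 1 ≤ C.2 a := by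
      intro C hC1 hC a
      rcases hC with hlt | ⟨_, hle⟩
      · rw [hC1] at hlt; exact absurd hlt (lt_irrefl 1)
      · exact hle a
    have ev1 : a₁ = C11.2 1 * C12.2 1 := by
      have h' : a₁ = C11.2 1 * C12.2 (1 * C11.1) := congrFun (congrArg Prod.snd e1) 1
      rwa [q11, mul_one] at h'
    have ev2 : a₂ = C21.2 1 * C22.2 1 := by
      have h' : a₂ = C21.2 1 * C22.2 (1 * C21.1) := congrFun (congrArg Prod.snd e2) 1
      rwa [q21, mul_one] at h'
    have ev3 : b₁ = C11.2 1 * C21.2 1 := by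
      have h' : b₁ = C11.2 1 * C21.2 (1 * C11.1) := congrFun (congrArg Prod.snd e3) 1
      rwa [q11, mul_one] at h'
    have ev4 : b₂ = C12.2 1 * C22.2 1 := by
      have h' : b₂ = C12.2 1 * C22.2 (1 * C12.1) := congrFun (congrArg Prod.snd e4) 1
      rwa [q12, mul_one] at h'
    refine ⟨C11.2 1, C12.2 1, C21.2 1, C22.2 1, pf _ q11 p11 1, pf _ q12 p12 1,
      pf _ q21 p21 1, pf _ q22 p22 1, ev1, ev2, ev3, ev4, ?_⟩
    intro z hz1 hz2
    set Z : A × (A → G) := ((1:A), fun a => if a = 1 then z else 1) with hZ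
    have hZ12 : wrLE Z C12 := by
      refine Or.inr ⟨q12.symm, fun a => ?_⟩
      show (if a = 1 then z else 1) ≤ C12.2 a
      split_ifs with ha
      · rw [ha]; exact hz1
      · exact pf _ q12 p12 a
    have hZ21 : wrLE Z C21 := by
      refine Or.inr ⟨q21.symm, fun a => ?_⟩
      show (if a = 1 then z else 1) ≤ C21.2 a
      split_ifs with ha
      · rw [ha]; exact hz2
      · exact pf _ q21 p21 a
    rcases hmeet Z hZ12 hZ21 with hlt | ⟨_, hle⟩
    · exact absurd hlt (lt_irrefl 1)
    · have := hle 1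
      simpa [hZ, wrOne] using this
  · -- G ⇒ W
    intro hG a₁ a₂ b₁ b₂ h1 h2 h3 h4 heq
    have heqW : wrMul a₁ a₂ = wrMul b₁ b₂ := heq
    have hfst : a₁.1 * a₂.1 = b₁.1 * b₂.1 := congrArg Prod.fst heq
    have hsnd : ∀ x : A, a₁.2 x * a₂.2 (x * a₁.1) = b₁.2 x * b₂.2 (x * b₁.1) :=
      fun x => congrFun (congrArg Prod.snd heq) x
    rcases lt_trichotomy a₁.1 b₁.1 with hlt | heq1 | hgt
    · -- a₁.1 < b₁.1
      have hc : (1 : A) < a₁.1⁻¹ * b₁.1 := by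
        have := mul_lt_mul_right hlt a₁.1⁻¹
        rwa [inv_mul_cancel] at this
      refine ⟨a₁, wrOne A G, wrMul (wrInv a₁) b₁, b₂, h1, Or.inr ⟨rfl, fun _ => le_refl 1⟩,
        Or.inl hc, h4, (wrMul_one a₁).symm, ?_, ?_, (one_wrMul b₂).symm, ?_⟩
      · symm
        calc wrMul (wrMul (wrInv a₁) b₁) b₂ = wrMul (wrInv a₁) (wrMul b₁ b₂) :=
              wrMul_assoc _ _ _
          _ = wrMul (wrInv a₁) (wrMul a₁ a₂) := by rw [← heqW]
          _ = wrMul (wrMul (wrInv a₁) a₁) a₂ := (wrMul_assoc _ _ _).symm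
          _ = a₂ := by rw [wrInv_mul, one_wrMul]
      · symm
        calc wrMul a₁ (wrMul (wrInv a₁) b₁) = wrMul (wrMul a₁ (wrInv a₁)) b₁ :=
              (wrMul_assoc _ _ _).symm
          _ = b₁ := by rw [wrMul_inv, one_wrMul]
      · intro z hz1 _
        exact hz1
    · -- a₁.1 = b₁.1
      have hn2 : a₂.1 = b₂.1 := by
        rw [heq1] at hfst
        exact mul_left_cancel hfst
      have master : ∀ b : A,
          a₁.2 (b * a₁.1⁻¹) * a₂.2 b = b₁.2 (b * a₁.1⁻¹) * b₂.2 b := by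
        intro b
        have := hsnd (b * a₁.1⁻¹)
        rw [← heq1] at this
        simpa only [inv_mul_cancel_right] using this
      have hPa : a₁.1 = 1 → ∀ b : A, 1 ≤ a₁.2 b := by
        intro hp b
        rcases h1 with hlt' | ⟨_, hle⟩
        · rw [hp] at hlt'; exact absurd hlt' (lt_irrefl 1)
        · exact hle b
      have hQa : a₁.1 = 1 → ∀ b : A, 1 ≤ b₁.2 b := by
        intro hp b
        rcases h3 with hlt' | ⟨_, hle⟩
        · rw [← heq1, hp] at hlt'; exact absurd hlt' (lt_irrefl 1)
        · exact hle b
      have hga : a₂.1 = 1 → ∀ b : A, 1 ≤ a₂.2 b := by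
        intro hp b
        rcases h2 with hlt' | ⟨_, hle⟩
        · rw [hp] at hlt'; exact absurd hlt' (lt_irrefl 1)
        · exact hle b
      have hha : a₂.1 = 1 → ∀ b : A, 1 ≤ b₂.2 b := by
        intro hp b
        rcases h4 with hlt' | ⟨_, hle⟩
        · rw [← hn2, hp] at hlt'; exact absurd hlt' (lt_irrefl 1)
        · exact hle b
      choose τ w u v hw hu hτ hv hPw hQu hguv hhwv hmeetG using fun b : A =>
        wr_decomp_point hdir hG (a₁.1 = 1) (a₂.1 = 1)
          (a₁.2 (b * a₁.1⁻¹)) (b₁.2 (b * a₁.1⁻¹)) (a₂.2 b) (b₂.2 b)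
          (fun hp => hPa hp _) (fun hp => hQa hp _)
          (fun hp => hga hp _) (fun hp => hha hp _) (master b)
      refine ⟨(a₁.1, fun a => τ (a * a₁.1)), ((1:A), w), ((1:A), u), (a₂.1, v),
        ?_, Or.inr ⟨rfl, hw⟩, Or.inr ⟨rfl, hu⟩, ?_, ?_, ?_, ?_, ?_, ?_⟩
      · rcases h1 with hlt' | ⟨heqn, _⟩
        · exact Or.inl hlt'
        · exact Or.inr ⟨heqn, fun a => hτ (a * a₁.1) heqn.symm⟩
      · rcases h2 with hlt' | ⟨heqn, _⟩
        · exact Or.inl hlt'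
        · exact Or.inr ⟨heqn, fun a => hv a heqn.symm⟩
      · refine Prod.ext_iff.mpr ⟨(mul_one a₁.1).symm, funext fun a => ?_⟩
        show a₁.2 a = τ (a * a₁.1) * w (a * a₁.1)
        have := hPw (a * a₁.1)
        rw [mul_inv_cancel_right] at this
        exact this.symm
      · refine Prod.ext_iff.mpr ⟨(one_mul a₂.1).symm, funext fun a => ?_⟩
        show a₂.2 a = u a * v (a * 1)
        rw [mul_one]
        exact (hguv a).symm
      · refine Prod.ext_iff.mpr ⟨?_, funext fun a => ?_⟩
        · show b₁.1 = a₁.1 * 1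
          rw [mul_one]; exact heq1.symm
        · show b₁.2 a = τ (a * a₁.1) * u (a * a₁.1)
          have := hQu (a * a₁.1)
          rw [mul_inv_cancel_right] at this
          exact this.symm
      · refine Prod.ext_iff.mpr ⟨?_, funext fun a => ?_⟩
        · show b₂.1 = 1 * a₂.1
          rw [one_mul]; exact hn2.symm
        · show b₂.2 a = w a * v (a * 1)
          rw [mul_one]
          exact (hhwv a).symm
      · intro z hz1 hz2
        rcases hz1 with hlt' | ⟨hzeq, hle1⟩
        · exact Or.inl hlt'
        · rcases hz2 with hlt'' | ⟨_, hle2⟩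
          · exact Or.inl hlt''
          · exact Or.inr ⟨hzeq, fun a => hmeetG a (z.2 a) (hle1 a) (hle2 a)⟩
    · -- b₁.1 < a₁.1
      have hc : (1 : A) < b₁.1⁻¹ * a₁.1 := by
        have := mul_lt_mul_right hgt b₁.1⁻¹
        rwa [inv_mul_cancel] at this
      refine ⟨b₁, wrMul (wrInv b₁) a₁, wrOne A G, a₂, h3, Or.inl hc,
        Or.inr ⟨rfl, fun _ => le_refl 1⟩, h2, ?_, (one_wrMul a₂).symm,
        (wrMul_one b₁).symm, ?_, ?_⟩
      · symm
        calc wrMul b₁ (wrMul (wrInv b₁) a₁) = wrMul (wrMul b₁ (wrInv b₁)) a₁ :=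
              (wrMul_assoc _ _ _).symm
          _ = a₁ := by rw [wrMul_inv, one_wrMul]
      · symm
        calc wrMul (wrMul (wrInv b₁) a₁) a₂ = wrMul (wrInv b₁) (wrMul a₁ a₂) :=
              wrMul_assoc _ _ _
          _ = wrMul (wrInv b₁) (wrMul b₁ b₂) := by rw [heqW]
          _ = wrMul (wrMul (wrInv b₁) b₁) b₂ := (wrMul_assoc _ _ _).symm
          _ = b₂ := by rw [wrInv_mul, one_wrMul]
      · intro z _ hz2
        exact hz2
end

section
/- Let G be a directed po-group. The following are equivalent: (i) the right wreath product ℤ ⃗wr G satisfies RDP₂; (ii) the left wreath product ℤ ⃖wr G satisfies RDP₂; (iii) G is linearly ordered. In any such case, the right and left wreath products are linearly ordered groups. -/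
set_option linter.unusedSectionVars false


section Aux
variable {G : Type*} [Group G]

/-- Kronecker delta function. -/
def dlt (k : ℤ) (g : G) : ℤ → G := fun i => if i = k then g else 1

lemma zwr_mul_one (p : ℤ × (ℤ → G)) : zwrMul p (zwrOne G) = p := by
  simp [zwrMul, zwrOne]

lemma zwr_one_mul (p : ℤ × (ℤ → G)) : zwrMul (zwrOne G) p = p := by
  simp [zwrMul, zwrOne]

lemma zwr_inv_one : zwrInv (zwrOne G) = zwrOne G := by
  simp [zwrInv, zwrOne]

lemma zwr_inv_mul (p : ℤ × (ℤ → G)) : zwrMul (zwrInv p) p = zwrOne G := by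
  simp [zwrMul, zwrInv, zwrOne]
  funext i
  simp [sub_eq_add_neg]

lemma zwr_mul_inv (p : ℤ × (ℤ → G)) : zwrMul p (zwrInv p) = zwrOne G := by
  simp [zwrMul, zwrInv, zwrOne]

lemma zwr_assoc (p q r : ℤ × (ℤ → G)) :
    zwrMul (zwrMul p q) r = zwrMul p (zwrMul q r) := by
  simp only [zwrMul]
  refine Prod.ext (add_assoc _ _ _) (funext fun i => ?_)
  simp [mul_assoc, add_assoc]

lemma zwr_invmul (p q : ℤ × (ℤ → G)) :
    zwrMul (zwrInv q) p = zwrInv (zwrMul (zwrInv p) q) := by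
  simp only [zwrMul, zwrInv]
  refine Prod.ext (by ring) (funext fun i => ?_)
  simp only [mul_inv_rev, inv_inv]
  ring_nf

end Aux

section Aux2
variable {G : Type*} [Group G]

lemma zwr_one_mem : zwrOne G ∈ zwrS G := by
  simp [zwrS, zwrOne, Function.mulSupport]

lemma zwr_dlt_mem (n k : ℤ) (g : G) : ((n, dlt k g) : ℤ × (ℤ → G)) ∈ zwrS G := by
  refine Set.Finite.subset (Set.finite_singleton k) ?_
  intro i hi
  simp only [Function.mem_mulSupport, dlt] at hi
  by_contra h
  simp only [Set.mem_singleton_iff] at h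
  exact hi (if_neg h)

lemma zwr_mul_mem {p q : ℤ × (ℤ → G)} (hp : p ∈ zwrS G) (hq : q ∈ zwrS G) :
    zwrMul p q ∈ zwrS G := by
  have h2 : (Function.mulSupport fun i => q.2 (i + p.1)).Finite := by
    refine Set.Finite.preimage ?_ hq
    exact fun a _ b _ h => by omega
  refine Set.Finite.subset (hp.union h2) ?_
  intro i hi
  simp only [Function.mem_mulSupport, zwrMul] at hi
  by_contra h
  simp only [Set.mem_union, Function.mem_mulSupport, not_or, not_not] at h
  exact hi (by simp [h.1, h.2])

lemma zwr_inv_mem {p : ℤ × (ℤ → G)} (hp : p ∈ zwrS G) : zwrInv p ∈ zwrS G := by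
  have h2 : (Function.mulSupport fun i => p.2 (i - p.1)).Finite := by
    refine Set.Finite.preimage ?_ hp
    exact fun a _ b _ h => by omega
  refine Set.Finite.subset h2 ?_
  intro i hi
  simp only [Function.mem_mulSupport, zwrInv] at hi ⊢
  simpa using hi

end Aux2

section Gen
variable {G : Type*} [Group G] [PartialOrder G]
  [CovariantClass G G (· * ·) (· ≤ ·)]
  [CovariantClass G G (Function.swap (· * ·)) (· ≤ ·)]

/-- Generic positivity predicate, specializing to `rPos`/`lPos`. -/
def gPos (rel : ℤ → ℤ → Prop) (p : ℤ × (ℤ → G)) : Prop :=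
  0 < p.1 ∨ (p.1 = 0 ∧ ∃ j : ℤ, 1 < p.2 j ∧ ∀ i : ℤ, rel j i → p.2 i = 1)

/-- Generic order, specializing to `rLE`/`lLE`. -/
def gLE (rel : ℤ → ℤ → Prop) (p q : ℤ × (ℤ → G)) : Prop :=
  p = q ∨ gPos rel (zwrMul (zwrInv p) q)

lemma rLE_eq : (rLE : (ℤ × (ℤ → G)) → _ → Prop) = gLE (· < ·) := rfl

lemma lLE_eq : (lLE : (ℤ × (ℤ → G)) → _ → Prop) = gLE (fun j i => i < j) := rfl

variable {rel : ℤ → ℤ → Prop}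

lemma one_gle_iff {p : ℤ × (ℤ → G)} :
    gLE rel (zwrOne G) p ↔ zwrOne G = p ∨ gPos rel p := by
  unfold gLE
  rw [zwr_inv_one, zwr_one_mul]

lemma gle_one_of_fst_pos {p : ℤ × (ℤ → G)} (h : 0 < p.1) : gLE rel (zwrOne G) p :=
  one_gle_iff.mpr (Or.inr (Or.inl h))

lemma fst_nonneg_of_one_gle {p : ℤ × (ℤ → G)} (h : gLE rel (zwrOne G) p) :
    0 ≤ p.1 := by
  rcases one_gle_iff.mp h with h | h | h
  · rw [← h]; exact le_refl 0
  · omega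
  · omega

lemma pos_struct {p : ℤ × (ℤ → G)} (h : gLE rel (zwrOne G) p) (h0 : p.1 = 0) :
    (∀ j, p.2 j = 1) ∨ ∃ j, 1 < p.2 j ∧ ∀ i, rel j i → p.2 i = 1 := by
  rcases one_gle_iff.mp h with h | h | ⟨_, j, hj, hj'⟩
  · exact Or.inl fun j => (congrFun (congrArg Prod.snd h) j).symm
  · omega
  · exact Or.inr ⟨j, hj, hj'⟩

lemma not_gle_dlt_one {g : G} (hg : (1 : G) < g) (k : ℤ) :
    ¬ gLE rel ((0, dlt k g) : ℤ × (ℤ → G)) (zwrOne G) := by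
  intro h
  rcases h with h | h
  · have := congrFun (congrArg Prod.snd h) k
    simp [dlt, zwrOne] at this
    exact absurd this (ne_of_gt hg)
  · rw [zwr_mul_one] at h
    rcases h with h | ⟨_, j, hj, _⟩
    · simp [zwrInv] at h
    · simp only [zwrInv, dlt] at hj
      rcases eq_or_ne (j - (0:ℤ)) k with hjk | hjk
      · rw [if_pos hjk] at hj
        have h2 : g * 1 < g * g⁻¹ := mul_lt_mul_right hj g
        simp only [mul_one, mul_inv_cancel] at h2
        exact lt_asymm hg h2
      · rw [if_neg hjk] at hj
        simp at hj

end Gen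

section Gen2
variable {G : Type*} [Group G] [PartialOrder G]
  [CovariantClass G G (· * ·) (· ≤ ·)]
  [CovariantClass G G (Function.swap (· * ·)) (· ≤ ·)]
  {rel : ℤ → ℤ → Prop}

lemma zwr_const_one_mem (n : ℤ) : ((n, fun _ => (1:G)) : ℤ × (ℤ → G)) ∈ zwrS G := by
  simp [zwrS, Function.mulSupport]

lemma inv_lt_one_of_one_lt' {c : G} (hc : 1 < c) : c⁻¹ < 1 := by
  have := mul_lt_mul_right hc c⁻¹
  simpa using this

lemma gkey (hrel : ∀ mp mq : ℤ, ∃ k, k ≠ mp ∧ k ≠ mq ∧ ¬ rel mp k ∧ ¬ rel mq k)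
    (hG : ∃ h : G, 1 < h)
    (H : RDP2WithOn (zwrS G) (fun p q : ℤ × (ℤ → G) => zwrMul p q) (zwrOne G) (gLE rel)) :
    ∀ y : G, 1 ≤ y ∨ y ≤ 1 := by
  obtain ⟨h, hh⟩ := hG
  intro y
  obtain ⟨c11, c12, c21, c22, m11, m12, m21, m22, p11, p12, p21, p22,
      e1, e2, e3, e4, hinf⟩ :=
    H ((1:ℤ), fun _ => (1:G)) ((1:ℤ), dlt 1 y) ((1:ℤ), dlt 0 y) ((1:ℤ), fun _ => (1:G))
      (zwr_const_one_mem 1) (zwr_dlt_mem 1 1 y) (zwr_dlt_mem 1 0 y) (zwr_const_one_mem 1)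
      (gle_one_of_fst_pos one_pos) (gle_one_of_fst_pos one_pos)
      (gle_one_of_fst_pos one_pos) (gle_one_of_fst_pos one_pos)
      (by
        refine Prod.ext rfl (funext fun i => ?_)
        simp only [zwrMul, dlt, one_mul, mul_one]
        exact if_congr (by omega) rfl rfl)
  have f1 : (1:ℤ) = c11.1 + c12.1 := congrArg Prod.fst e1
  have f3 : (1:ℤ) = c11.1 + c21.1 := congrArg Prod.fst e3
  have n11 : 0 ≤ c11.1 := fst_nonneg_of_one_gle p11
  have n12 : 0 ≤ c12.1 := fst_nonneg_of_one_gle p12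
  have n21 : 0 ≤ c21.1 := fst_nonneg_of_one_gle p21
  rcases (show c12.1 = 1 ∨ c12.1 = 0 by omega) with hc12 | hc12
  · -- c12 has positive first coordinate, contradiction via inf clause
    exfalso
    have hc21 : c21.1 = 1 := by omega
    have h1 : gLE rel ((0:ℤ), dlt 0 h) c12 :=
      Or.inr (Or.inl (by simp only [zwrMul, zwrInv]; simp; omega))
    have h2 : gLE rel ((0:ℤ), dlt 0 h) c21 :=
      Or.inr (Or.inl (by simp only [zwrMul, zwrInv]; simp; omega))
    exact not_gle_dlt_one hh 0 (hinf _ (zwr_dlt_mem 0 0 h) h1 h2)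
  · have h11 : c11.1 = 1 := by omega
    have hc21 : c21.1 = 0 := by omega
    have s1 : ∀ i : ℤ, c11.2 i * c12.2 (i + c11.1) = 1 :=
      fun i => (congrFun (congrArg Prod.snd e1) i).symm
    have s3 : ∀ i : ℤ, c11.2 i * c21.2 (i + c11.1) = dlt 0 y i :=
      fun i => (congrFun (congrArg Prod.snd e3) i).symm
    have hp : ∀ j : ℤ, c12.2 j = (c11.2 (j-1))⁻¹ := by
      intro j
      have := s1 (j-1)
      rw [h11, show j - 1 + 1 = j by ring] at this
      rw [inv_eq_of_mul_eq_one_right this]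
    have hq : ∀ j : ℤ, c21.2 j = (c11.2 (j-1))⁻¹ * dlt 0 y (j-1) := by
      intro j
      have := s3 (j-1)
      rw [h11, show j - 1 + 1 = j by ring] at this
      rw [← this, ← mul_assoc, inv_mul_cancel, one_mul]
    have hq1 : c21.2 1 = c12.2 1 * y := by
      rw [hq, hp]
      simp [dlt]
    have hqp : ∀ j : ℤ, j ≠ 1 → c21.2 j = c12.2 j := by
      intro j hj
      rw [hq, hp, dlt, if_neg (show ¬ (j - 1 = 0) by omega), mul_one]
    rcases pos_struct p12 hc12 with P1 | ⟨mp, hmp, hmp'⟩ <;>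
      rcases pos_struct p21 hc21 with Q1 | ⟨mq, hmq, hmq'⟩
    · have : y = 1 := by
        have := hq1
        rw [P1 1, Q1 1, one_mul] at this
        exact this.symm
      exact Or.inl (le_of_eq this.symm)
    · rcases eq_or_ne mq 1 with hmq1 | hmq1
      · subst hmq1
        rw [hq1, P1 1, one_mul] at hmq
        exact Or.inl (le_of_lt hmq)
      · rw [hqp mq hmq1, P1 mq] at hmq
        exact absurd hmq (lt_irrefl 1)
    · rcases eq_or_ne mp 1 with hmp1 | hmp1
      · subst hmp1
        have hy : y = (c12.2 1)⁻¹ := by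
          have := hq1
          rw [Q1 1] at this
          exact eq_inv_of_mul_eq_one_right this.symm
        rw [hy]
        exact Or.inr (le_of_lt (inv_lt_one_of_one_lt' hmp))
      · rw [← hqp mp hmp1, Q1 mp] at hmp
        exact absurd hmp (lt_irrefl 1)
    · exfalso
      obtain ⟨k, hk1, hk2, hkp, hkq⟩ := hrel mp mq
      have entry : ∀ c : ℤ × (ℤ → G), c.1 = 0 → ∀ i : ℤ,
          (zwrMul (zwrInv ((0:ℤ), dlt k h)) c).2 i = (dlt k h i)⁻¹ * c.2 i := by
        intro c hc i
        simp [zwrMul, zwrInv]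
      have hfst : ∀ c : ℤ × (ℤ → G), c.1 = 0 →
          (zwrMul (zwrInv ((0:ℤ), dlt k h)) c).1 = 0 := by
        intro c hc
        simp [zwrMul, zwrInv, hc]
      have h1 : gLE rel ((0:ℤ), dlt k h) c12 := by
        refine Or.inr (Or.inr ⟨hfst c12 hc12, mp, ?_, ?_⟩)
        · rw [entry c12 hc12 mp, dlt, if_neg hk1.symm, inv_one, one_mul]
          exact hmp
        · intro i hi
          rw [entry c12 hc12 i, dlt,
            if_neg (fun hik : i = k => hkp (hik ▸ hi)), inv_one, one_mul]
          exact hmp' i hi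
      have h2 : gLE rel ((0:ℤ), dlt k h) c21 := by
        refine Or.inr (Or.inr ⟨hfst c21 hc21, mq, ?_, ?_⟩)
        · rw [entry c21 hc21 mq, dlt, if_neg hk2.symm, inv_one, one_mul]
          exact hmq
        · intro i hi
          rw [entry c21 hc21 i, dlt,
            if_neg (fun hik : i = k => hkq (hik ▸ hi)), inv_one, one_mul]
          exact hmq' i hi
      exact not_gle_dlt_one hh k (hinf _ (zwr_dlt_mem 0 k h) h1 h2)
end Gen2

section Gen3
variable {G : Type*} [Group G] [PartialOrder G]
  [CovariantClass G G (· * ·) (· ≤ ·)]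
  [CovariantClass G G (Function.swap (· * ·)) (· ≤ ·)]
  {rel : ℤ → ℤ → Prop}

lemma zwr_mul_invmul (p q : ℤ × (ℤ → G)) :
    zwrMul p (zwrMul (zwrInv p) q) = q := by
  rw [← zwr_assoc, zwr_mul_inv, zwr_one_mul]

lemma zwr_invmul_mul (p q : ℤ × (ℤ → G)) :
    zwrMul (zwrInv p) (zwrMul p q) = q := by
  rw [← zwr_assoc, zwr_inv_mul, zwr_one_mul]

lemma gtotal (hext : ∀ T : Finset ℤ, T.Nonempty → ∃ j ∈ T, ∀ i, rel j i → i ∉ T)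
    (hlin : ∀ a b : G, a ≤ b ∨ b ≤ a) :
    ∀ p ∈ zwrS G, ∀ q ∈ zwrS G, gLE rel p q ∨ gLE rel q p := by
  intro p hp q hq
  set r := zwrMul (zwrInv p) q with hr_def
  have hr : r ∈ zwrS G := zwr_mul_mem (zwr_inv_mem hp) hq
  have key : r = zwrOne G ∨ gPos rel r ∨ gPos rel (zwrInv r) := by
    rcases Int.lt_trichotomy r.1 0 with h0 | h0 | h0
    · refine Or.inr (Or.inr (Or.inl ?_))
      show (0:ℤ) < -r.1
      omega
    · by_cases hsupp : ∀ j, r.2 j = 1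
      · exact Or.inl (Prod.ext h0 (funext hsupp))
      · push_neg at hsupp
        obtain ⟨j0, hj0⟩ := hsupp
        obtain ⟨j, hjT, hjext⟩ := hext hr.toFinset
          ⟨j0, hr.mem_toFinset.mpr hj0⟩
        have hjne : r.2 j ≠ 1 := hr.mem_toFinset.mp hjT
        have hout : ∀ i, rel j i → r.2 i = 1 := fun i hi => by
          have := hjext i hi
          rw [hr.mem_toFinset] at this
          exact not_not.mp this
        rcases hlin (r.2 j) 1 with hle | hle
        · refine Or.inr (Or.inr (Or.inr ⟨by show -r.1 = 0; omega, j, ?_, ?_⟩))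
          · show 1 < (r.2 (j - r.1))⁻¹
            rw [h0, sub_zero]
            have hlt : r.2 j < 1 := lt_of_le_of_ne hle hjne
            have := mul_lt_mul_right hlt (r.2 j)⁻¹
            simpa using this
          · intro i hi
            show (r.2 (i - r.1))⁻¹ = 1
            rw [h0, sub_zero, hout i hi, inv_one]
        · exact Or.inr (Or.inl (Or.inr ⟨h0, j, lt_of_le_of_ne hle (Ne.symm hjne), hout⟩))
    · exact Or.inr (Or.inl (Or.inl h0))
  rcases key with h | h | h
  · left; left
    have : q = zwrMul p r := (zwr_mul_invmul p q).symm
    rw [h, zwr_mul_one] at this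
    exact this.symm
  · exact Or.inl (Or.inr h)
  · right
    refine Or.inr ?_
    rw [zwr_invmul]
    exact h

lemma grdp2_of_total
    (htot : ∀ p ∈ zwrS G, ∀ q ∈ zwrS G, gLE rel p q ∨ gLE rel q p) :
    RDP2WithOn (zwrS G) (fun p q : ℤ × (ℤ → G) => zwrMul p q) (zwrOne G) (gLE rel) := by
  intro a1 a2 b1 b2 ha1 ha2 hb1 hb2 pa1 pa2 pb1 pb2 hprod
  simp only at hprod ⊢
  rcases htot a1 ha1 b1 hb1 with hab | hab
  · refine ⟨a1, zwrOne G, zwrMul (zwrInv a1) b1, b2,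
      ha1, zwr_one_mem, zwr_mul_mem (zwr_inv_mem ha1) hb1, hb2,
      pa1, Or.inl rfl, ?_, pb2, (zwr_mul_one a1).symm, ?_, ?_, (zwr_one_mul b2).symm,
      fun z _ h1 _ => h1⟩
    · rcases hab with heq | hpos
      · exact Or.inl (heq ▸ (zwr_inv_mul b1).symm)
      · refine Or.inr ?_
        rw [zwr_inv_one, zwr_one_mul]
        exact hpos
    · rw [zwr_assoc, ← hprod, zwr_invmul_mul]
    · rw [zwr_mul_invmul]
  · refine ⟨b1, zwrMul (zwrInv b1) a1, zwrOne G, a2,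
      hb1, zwr_mul_mem (zwr_inv_mem hb1) ha1, zwr_one_mem, ha2,
      pb1, ?_, Or.inl rfl, pa2, ?_, (zwr_one_mul a2).symm, (zwr_mul_one b1).symm, ?_,
      fun z _ _ h2 => h2⟩
    · rcases hab with heq | hpos
      · exact Or.inl (heq ▸ (zwr_inv_mul a1).symm)
      · refine Or.inr ?_
        rw [zwr_inv_one, zwr_one_mul]
        exact hpos
    · rw [zwr_mul_invmul]
    · rw [zwr_assoc, hprod, zwr_invmul_mul]
end Gen3

/-- For a directed po-group `G`, the right wreath product
`ℤ →wr G` satisfies RDP₂ iff the left wreath product `ℤ ←wr G` satisfies RDP₂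
iff `G` is linearly ordered; and in any such case both wreath products are
linearly ordered groups. -/

theorem zwr_rdp2_iff_linearOrdered {G : Type*} [Group G] [PartialOrder G]
    [CovariantClass G G (· * ·) (· ≤ ·)]
    [CovariantClass G G (Function.swap (· * ·)) (· ≤ ·)]
    (hdir : ∀ x y : G, ∃ z : G, x ≤ z ∧ y ≤ z) :
    (RDP2WithOn (zwrS G) (fun p q : ℤ × (ℤ → G) => zwrMul p q) (zwrOne G) rLE ↔
      ∀ a b : G, a ≤ b ∨ b ≤ a) ∧
    (RDP2WithOn (zwrS G) (fun p q : ℤ × (ℤ → G) => zwrMul p q) (zwrOne G) lLE ↔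
      ∀ a b : G, a ≤ b ∨ b ≤ a) ∧
    ((∀ a b : G, a ≤ b ∨ b ≤ a) →
      (∀ p ∈ zwrS G, ∀ q ∈ zwrS G, rLE p q ∨ rLE q p) ∧
      (∀ p ∈ zwrS G, ∀ q ∈ zwrS G, lLE p q ∨ lLE q p)) := by
  have hext_r : ∀ T : Finset ℤ, T.Nonempty → ∃ j ∈ T, ∀ i, j < i → i ∉ T := by
    intro T hT
    exact ⟨T.max' hT, T.max'_mem hT, fun i hi hiT => absurd (T.le_max' i hiT) (by omega)⟩
  have hext_l : ∀ T : Finset ℤ, T.Nonempty → ∃ j ∈ T, ∀ i, i < j → i ∉ T := by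
    intro T hT
    exact ⟨T.min' hT, T.min'_mem hT, fun i hi hiT => absurd (T.min'_le i hiT) (by omega)⟩
  have hrel_r : ∀ mp mq : ℤ, ∃ k, k ≠ mp ∧ k ≠ mq ∧ ¬ mp < k ∧ ¬ mq < k :=
    fun mp mq => ⟨min mp mq - 1, by omega, by omega, by omega, by omega⟩
  have hrel_l : ∀ mp mq : ℤ, ∃ k : ℤ, k ≠ mp ∧ k ≠ mq ∧ ¬ k < mp ∧ ¬ k < mq :=
    fun mp mq => ⟨max mp mq + 1, by omega, by omega, by omega, by omega⟩
  have lin_of_comp : (∀ y : G, 1 ≤ y ∨ y ≤ 1) → ∀ a b : G, a ≤ b ∨ b ≤ a := by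
    intro hc a b
    rcases hc (a⁻¹ * b) with h | h
    · left
      have := mul_le_mul_right h a
      rwa [mul_one, mul_inv_cancel_left] at this
    · right
      have := mul_le_mul_right h a
      rwa [mul_inv_cancel_left, mul_one] at this
  have hkey_of : ∀ (rel : ℤ → ℤ → Prop),
      (∀ mp mq : ℤ, ∃ k, k ≠ mp ∧ k ≠ mq ∧ ¬ rel mp k ∧ ¬ rel mq k) →
      RDP2WithOn (zwrS G) (fun p q : ℤ × (ℤ → G) => zwrMul p q) (zwrOne G) (gLE rel) →
      ∀ a b : G, a ≤ b ∨ b ≤ a := by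
    intro rel hrel H
    by_cases hG : ∃ h : G, 1 < h
    · exact lin_of_comp (gkey hrel hG H)
    · push_neg at hG
      have hle1 : ∀ a : G, a ≤ 1 := by
        intro a
        obtain ⟨z, hz1, hz2⟩ := hdir a 1
        rcases hz2.lt_or_eq with hlt | heq
        · exact absurd hlt (hG z)
        · exact heq ▸ hz1
      have h1 : ∀ a : G, a = 1 := by
        intro a
        refine le_antisymm (hle1 a) ?_
        have := mul_le_mul_right (hle1 a⁻¹) a
        rwa [mul_inv_cancel, mul_one] at this
      intro a b
      rw [h1 a, h1 b]
      exact Or.inl le_rfl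
  exact ⟨⟨fun H => hkey_of _ hrel_r H, fun hlin => grdp2_of_total (gtotal hext_r hlin)⟩,
    ⟨fun H => hkey_of _ hrel_l H, fun hlin => grdp2_of_total (gtotal hext_l hlin)⟩,
    fun hlin => ⟨gtotal hext_r hlin, gtotal hext_l hlin⟩⟩
end

section
/- Let G be a directed po-group. If the right wreath product ℤ ⃗wr G (respectively the left wreath product ℤ ⃖wr G) satisfies RDP₁, then G satisfies RDP₁. -/
section Helpers

/-- Positivity parametrized by a sign `ε`: `ε = 1` gives `rPos`, `ε = -1` gives `lPos`. -/
def ePos {G : Type*} [One G] [LT G] (ε : ℤ) (p : ℤ × (ℤ → G)) : Prop :=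
  0 < p.1 ∨ (p.1 = 0 ∧ ∃ j : ℤ, 1 < p.2 j ∧ ∀ i : ℤ, ε * j < ε * i → p.2 i = 1)

/-- Order parametrized by a sign. -/
def eLE {G : Type*} [Group G] [LT G] (ε : ℤ) (p q : ℤ × (ℤ → G)) : Prop :=
  p = q ∨ ePos ε (zwrMul (zwrInv p) q)

variable {G : Type*} [Group G] [PartialOrder G]
  [CovariantClass G G (· * ·) (· ≤ ·)]
  [CovariantClass G G (Function.swap (· * ·)) (· ≤ ·)]

theorem rLE_eq_eLE : (rLE : ℤ × (ℤ → G) → ℤ × (ℤ → G) → Prop) = eLE 1 := by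
  funext p q
  simp only [rLE, eLE, rPos, ePos, one_mul]

theorem lLE_eq_eLE : (lLE : ℤ × (ℤ → G) → ℤ × (ℤ → G) → Prop) = eLE (-1) := by
  funext p q
  simp only [lLE, eLE, lPos, ePos, neg_mul, one_mul, neg_lt_neg_iff]

/-- Embedding of `G` at index `0`. -/
def emb (g : G) : ℤ × (ℤ → G) := (0, fun i => if i = 0 then g else 1)

theorem emb_mem (g : G) : emb g ∈ zwrS G := by
  apply Set.Finite.subset (Set.finite_singleton (0:ℤ))
  intro i hi
  simp only [Function.mem_mulSupport, emb] at hi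
  by_contra h
  exact hi (if_neg (by simpa using h))

theorem emb_mul (g h : G) : zwrMul (emb g) (emb h) = emb (g * h) := by
  unfold zwrMul emb
  refine Prod.ext (by simp) ?_
  funext i
  by_cases h0 : i = 0 <;> simp [h0]

theorem one_inv_mul (p : ℤ × (ℤ → G)) : zwrMul (zwrInv (zwrOne G)) p = p := by
  unfold zwrMul zwrInv zwrOne
  refine Prod.ext (by simp) ?_
  funext i
  simp

theorem eLE_one_iff (ε : ℤ) (p : ℤ × (ℤ → G)) :
    eLE ε (zwrOne G) p ↔ (zwrOne G = p ∨ ePos ε p) := by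
  rw [eLE, one_inv_mul]

theorem emb_le (ε : ℤ) {g : G} (hg : 1 ≤ g) : eLE ε (zwrOne G) (emb g) := by
  rcases eq_or_lt_of_le hg with h | h
  · left
    unfold zwrOne emb
    refine Prod.ext rfl ?_
    funext i
    by_cases h0 : i = 0 <;> simp [h0, ← h]
  · rw [eLE_one_iff]
    right
    refine Or.inr ⟨rfl, 0, ?_, ?_⟩
    · simpa [emb] using h
    · intro i hi
      have hne : i ≠ 0 := by rintro rfl; exact lt_irrefl _ hi
      simp [emb, hne]

theorem fst_nonneg (ε : ℤ) {p : ℤ × (ℤ → G)} (h : eLE ε (zwrOne G) p) : 0 ≤ p.1 := by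
  rcases (eLE_one_iff ε p).1 h with h | h
  · rw [← h]; exact le_refl _
  · rcases h with h | ⟨h, _⟩
    · exact h.le
    · exact h.ge

theorem pos_form (ε : ℤ) {p : ℤ × (ℤ → G)} (h : eLE ε (zwrOne G) p) (h0 : p.1 = 0) :
    (∀ i, p.2 i = 1) ∨ ∃ j, 1 < p.2 j ∧ ∀ i, ε * j < ε * i → p.2 i = 1 := by
  rcases (eLE_one_iff ε p).1 h with h | h
  · left
    intro i
    exact (congrFun (congrArg Prod.snd h) i).symm
  · rcases h with h | ⟨_, hj⟩
    · omega
    · exact Or.inr hj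

theorem vanish {ε : ℤ} (hε : ε ≠ 0) {f g : ℤ → G}
    (hf : (∀ i, f i = 1) ∨ ∃ j, 1 < f j ∧ ∀ i, ε * j < ε * i → f i = 1)
    (hg : (∀ i, g i = 1) ∨ ∃ j, 1 < g j ∧ ∀ i, ε * j < ε * i → g i = 1)
    (hfg : ∀ i, i ≠ 0 → f i * g i = 1) :
    ∀ i, ε * 0 < ε * i → f i = 1 ∧ g i = 1 := by
  intro i₀ hi₀
  have hne : i₀ ≠ 0 := by rintro rfl; exact lt_irrefl _ hi₀
  have hiff : f i₀ = 1 ↔ g i₀ = 1 := by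
    have hm := hfg i₀ hne
    constructor
    · intro h; rwa [h, one_mul] at hm
    · intro h; rwa [h, mul_one] at hm
  suffices hf0 : f i₀ = 1 by exact ⟨hf0, hiff.1 hf0⟩
  by_contra hcon
  have hg0 : g i₀ ≠ 1 := fun h => hcon (hiff.2 h)
  obtain ⟨j₁, hj₁, ht₁⟩ := hf.resolve_left fun h => hcon (h i₀)
  obtain ⟨j₂, hj₂, ht₂⟩ := hg.resolve_left fun h => hg0 (h i₀)
  have h1 : ¬ ε * j₁ < ε * i₀ := fun h => hcon (ht₁ _ h)
  have h2 : ¬ ε * j₂ < ε * i₀ := fun h => hg0 (ht₂ _ h)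
  push_neg at h1 h2
  have hj₁0 : j₁ ≠ 0 := by rintro rfl; exact absurd (lt_of_lt_of_le hi₀ h1) (lt_irrefl _)
  have hj₂0 : j₂ ≠ 0 := by rintro rfl; exact absurd (lt_of_lt_of_le hi₀ h2) (lt_irrefl _)
  rcases lt_trichotomy (ε * j₁) (ε * j₂) with h | h | h
  · have hf2 : f j₂ = 1 := ht₁ _ h
    have hm := hfg j₂ hj₂0
    rw [hf2, one_mul] at hm
    exact absurd hm (ne_of_gt hj₂)
  · have hj : j₁ = j₂ := mul_left_cancel₀ hε h
    subst hj
    have hm := hfg j₁ hj₁0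
    have : (1:G) < f j₁ * g j₁ := lt_of_lt_of_le hj₁ (le_mul_of_one_le_right' hj₂.le)
    rw [hm] at this
    exact lt_irrefl _ this
  · have hg1 : g j₁ = 1 := ht₂ _ h
    have hm := hfg j₁ hj₁0
    rw [hg1, mul_one] at hm
    exact absurd hm (ne_of_gt hj₁)

theorem val0 {ε : ℤ} (hε : ε ≠ 0) {f : ℤ → G}
    (hf : (∀ i, f i = 1) ∨ ∃ j, 1 < f j ∧ ∀ i, ε * j < ε * i → f i = 1)
    (hvan : ∀ i, ε * 0 < ε * i → f i = 1) : 1 ≤ f 0 := by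
  rcases hf with h | ⟨j, hj, ht⟩
  · exact (h 0).ge
  · rcases lt_trichotomy (ε * j) (ε * 0) with h | h | h
    · exact (ht 0 h).ge
    · have : j = 0 := mul_left_cancel₀ hε h
      exact (this ▸ hj).le
    · rw [hvan j h] at hj
      exact absurd hj (lt_irrefl _)

theorem key {ε : ℤ} (hε : ε ≠ 0)
    (H : RDP1WithOn (zwrS G) (fun p q : ℤ × (ℤ → G) => zwrMul p q) (zwrOne G) (eLE ε)) :
    RDP1With (fun a b : G => a * b) 1 (· ≤ ·) := by
  intro a₁ a₂ b₁ b₂ ha₁ ha₂ hb₁ hb₂ hab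
  obtain ⟨C11, C12, C21, C22, m11, m12, m21, m22, p11, p12, p21, p22,
      e₁, e₂, e₃, e₄, hcomm⟩ :=
    H (emb a₁) (emb a₂) (emb b₁) (emb b₂) (emb_mem a₁) (emb_mem a₂) (emb_mem b₁)
      (emb_mem b₂) (emb_le ε ha₁) (emb_le ε ha₂) (emb_le ε hb₁) (emb_le ε hb₂)
      (by show zwrMul (emb a₁) (emb a₂) = zwrMul (emb b₁) (emb b₂)
          rw [emb_mul, emb_mul]
          exact congrArg emb hab)
  -- first components are all zero
  have hn11 : 0 ≤ C11.1 := fst_nonneg ε p11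
  have hn12 : 0 ≤ C12.1 := fst_nonneg ε p12
  have hn21 : 0 ≤ C21.1 := fst_nonneg ε p21
  have hn22 : 0 ≤ C22.1 := fst_nonneg ε p22
  have hs1 : (0:ℤ) = C11.1 + C12.1 := by
    have := congrArg Prod.fst e₁; simpa [emb, zwrMul] using this
  have hs2 : (0:ℤ) = C21.1 + C22.1 := by
    have := congrArg Prod.fst e₂; simpa [emb, zwrMul] using this
  have h11 : C11.1 = 0 := by omega
  have h12 : C12.1 = 0 := by omega
  have h21 : C21.1 = 0 := by omega
  have h22 : C22.1 = 0 := by omega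
  -- pointwise equations
  have hpt : ∀ (a : G) (C D : ℤ × (ℤ → G)), C.1 = 0 → emb a = zwrMul C D →
      ∀ i, C.2 i * D.2 i = (if i = 0 then a else 1) := by
    intro a C D hC hE i
    have := congrFun (congrArg Prod.snd hE) i
    simp only [emb, zwrMul, hC, add_zero] at this
    exact this.symm
  have hpt1 := hpt a₁ C11 C12 h11 e₁
  have hpt2 := hpt a₂ C21 C22 h21 e₂
  have hpt3 := hpt b₁ C11 C21 h11 e₃
  have hpt4 := hpt b₂ C12 C22 h12 e₄
  have hne1 : ∀ i, i ≠ 0 → C11.2 i * C12.2 i = 1 := by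
    intro i hi; rw [hpt1 i, if_neg hi]
  have hne2 : ∀ i, i ≠ 0 → C21.2 i * C22.2 i = 1 := by
    intro i hi; rw [hpt2 i, if_neg hi]
  -- positivity forms
  have P11 := pos_form ε p11 h11
  have P12 := pos_form ε p12 h12
  have P21 := pos_form ε p21 h21
  have P22 := pos_form ε p22 h22
  have hv1 := vanish hε P11 P12 hne1
  have hv2 := vanish hε P21 P22 hne2
  refine ⟨C11.2 0, C12.2 0, C21.2 0, C22.2 0,
    val0 hε P11 (fun i hi => (hv1 i hi).1),
    val0 hε P12 (fun i hi => (hv1 i hi).2),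
    val0 hε P21 (fun i hi => (hv2 i hi).1),
    val0 hε P22 (fun i hi => (hv2 i hi).2),
    by simpa using (hpt1 0).symm, by simpa using (hpt2 0).symm,
    by simpa using (hpt3 0).symm, by simpa using (hpt4 0).symm, ?_⟩
  -- commutativity
  intro x y hx1 hx2 hy1 hy2
  by_cases hxe1 : x = 1
  · simp [hxe1]
  by_cases hye1 : y = 1
  · simp [hye1]
  have hxlt : 1 < x := lt_of_le_of_ne hx1 (Ne.symm hxe1)
  have hylt : 1 < y := lt_of_le_of_ne hy1 (Ne.symm hye1)
  set X : ℤ × (ℤ → G) := (0, Function.update C12.2 0 x) with hX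
  set Y : ℤ × (ℤ → G) := (0, Function.update C21.2 0 y) with hY
  have hupd : ∀ (f : ℤ → G) (c : G) (i : ℤ), i ≠ 0 → Function.update f 0 c i = f i := by
    intro f c i hi; exact Function.update_of_ne hi _ _
  have hXmem : X ∈ zwrS G := by
    apply Set.Finite.subset (Set.Finite.insert 0 m12)
    intro i hi
    simp only [Function.mem_mulSupport, hX] at hi
    by_cases h0 : i = 0
    · exact Set.mem_insert_iff.2 (Or.inl h0)
    · rw [hupd _ _ _ h0] at hi
      exact Set.mem_insert_iff.2 (Or.inr hi)
  have hYmem : Y ∈ zwrS G := by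
    apply Set.Finite.subset (Set.Finite.insert 0 m21)
    intro i hi
    simp only [Function.mem_mulSupport, hY] at hi
    by_cases h0 : i = 0
    · exact Set.mem_insert_iff.2 (Or.inl h0)
    · rw [hupd _ _ _ h0] at hi
      exact Set.mem_insert_iff.2 (Or.inr hi)
  have hXpos : eLE ε (zwrOne G) X := by
    rw [eLE_one_iff]
    refine Or.inr (Or.inr ⟨rfl, 0, ?_, ?_⟩)
    · simpa [hX] using hxlt
    · intro i hi
      have h0 : i ≠ 0 := by rintro rfl; exact lt_irrefl _ hi
      show Function.update C12.2 0 x i = 1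
      rw [hupd _ _ _ h0]
      exact (hv1 i hi).2
  have hYpos : eLE ε (zwrOne G) Y := by
    rw [eLE_one_iff]
    refine Or.inr (Or.inr ⟨rfl, 0, ?_, ?_⟩)
    · simpa [hY] using hylt
    · intro i hi
      have h0 : i ≠ 0 := by rintro rfl; exact lt_irrefl _ hi
      show Function.update C21.2 0 y i = 1
      rw [hupd _ _ _ h0]
      exact (hv2 i hi).1
  have hle_aux : ∀ (c : G) (C : ℤ × (ℤ → G)), C.1 = 0 → c ≤ C.2 0 →
      eLE ε (0, Function.update C.2 0 c) C := by
    intro c C hC hcle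
    by_cases hce : c = C.2 0
    · left
      refine Prod.ext (by simp [hC]) ?_
      simp only []
      rw [hce, Function.update_eq_self]
    · right
      refine Or.inr ⟨by simp [zwrMul, zwrInv, hC], 0, ?_, ?_⟩
      · have hclt : c < C.2 0 := lt_of_le_of_ne hcle hce
        have : c⁻¹ * c < c⁻¹ * C.2 0 := mul_lt_mul_right hclt _
        rw [inv_mul_cancel] at this
        simpa [zwrMul, zwrInv] using this
      · intro i hi
        have h0 : i ≠ 0 := by rintro rfl; exact lt_irrefl _ hi
        show (zwrMul (zwrInv (0, Function.update C.2 0 c)) C).2 i = 1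
        simp only [zwrMul, zwrInv, neg_zero, add_zero]
        rw [show i - (0:ℤ) = i from sub_zero i, Function.update_of_ne h0, inv_mul_cancel]
  have hXle : eLE ε X C12 := hle_aux x C12 h12 hx2
  have hYle : eLE ε Y C21 := hle_aux y C21 h21 hy2
  have := hcomm X Y hXmem hYmem hXpos hXle hYpos hYle
  have h0 := congrFun (congrArg Prod.snd this) 0
  simpa [zwrMul, hX, hY] using h0

end Helpers

/-- For a directed po-group `G`, if the right wreath product
`ℤ →wr G` (resp. the left wreath product `ℤ ←wr G`) satisfies RDP₁, then so
does `G`. -/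
theorem rdp1_of_zwr_rdp1 {G : Type*} [Group G] [PartialOrder G]
    [CovariantClass G G (· * ·) (· ≤ ·)]
    [CovariantClass G G (Function.swap (· * ·)) (· ≤ ·)]
    (hdir : ∀ x y : G, ∃ z : G, x ≤ z ∧ y ≤ z) :
    (RDP1WithOn (zwrS G) (fun p q : ℤ × (ℤ → G) => zwrMul p q) (zwrOne G) rLE →
      RDP1With (fun a b : G => a * b) 1 (· ≤ ·)) ∧
    (RDP1WithOn (zwrS G) (fun p q : ℤ × (ℤ → G) => zwrMul p q) (zwrOne G) lLE →
      RDP1With (fun a b : G => a * b) 1 (· ≤ ·)) := by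
  constructor
  · intro H
    rw [rLE_eq_eLE] at H
    exact key one_ne_zero H
  · intro H
    rw [lLE_eq_eLE] at H
    exact key (by norm_num) H
end
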